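/- Along any solution of Demchenko's system, the area integral P²·(s(t)² + τ(t)²) + A²·n(t)² + k² − 2k·(P·s(t)·sin(u(t)) − A·n(t)·cos(u(t))) is constant in t (it equals Γ², the squared magnitude of the total angular momentum of the gyroscopic ball with respect to the contact point). -/

import Mathlib

open Real

/-- Along any solution of Demchenko's system for a gyroscopic ball rolling without
sliding over a sphere, the area integral
`P²(s² + τ²) + A²n² + k² − 2k(P s sin u − A n cos u)` is constant (it equals `Γ²`, the
squared magnitude of the total angular momentum with respect to the contact point). -/
theorem demchenko_area_integral
    (A P k μ : ℝ) (hA : 0 < A) (hP : A < P) (hk : k ≠ 0) (hμ : 1 < μ)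
    (u v n s τ : ℝ → ℝ)
    (hu : Differentiable ℝ u) (hv : Differentiable ℝ v) (hn : Differentiable ℝ n)
    (hs : ∀ t, s t = μ * Real.sin (u t) * deriv v t)
    (hτ : ∀ t, τ t = -μ * deriv u t)
    (hsd : Differentiable ℝ s) (hτd : Differentiable ℝ τ)
    (heq1 : ∀ t, P * deriv s t - (μ - 1) * A * n t * deriv u t
        - P * τ t * (n t + Real.cos (u t) * deriv v t)
      = k * μ * Real.cos (u t) * deriv u t)
    (heq2 : ∀ t, P * deriv τ t - (μ - 1) * A * n t * Real.sin (u t) * deriv v t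
        + P * s t * (n t + Real.cos (u t) * deriv v t)
      = k * (n t * Real.sin (u t) + μ * Real.sin (u t) * Real.cos (u t) * deriv v t))
    (heq3 : ∀ t, A * deriv n t = k * μ * Real.sin (u t) * deriv u t) :
    ∀ t₁ t₂ : ℝ,
      P ^ 2 * (s t₁ ^ 2 + τ t₁ ^ 2) + A ^ 2 * n t₁ ^ 2 + k ^ 2
          - 2 * k * (P * s t₁ * Real.sin (u t₁) - A * n t₁ * Real.cos (u t₁))
        = P ^ 2 * (s t₂ ^ 2 + τ t₂ ^ 2) + A ^ 2 * n t₂ ^ 2 + k ^ 2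
          - 2 * k * (P * s t₂ * Real.sin (u t₂) - A * n t₂ * Real.cos (u t₂)) := by
  set F : ℝ → ℝ := fun t =>
    P ^ 2 * (s t ^ 2 + τ t ^ 2) + A ^ 2 * n t ^ 2 + k ^ 2
      - 2 * k * (P * s t * Real.sin (u t) - A * n t * Real.cos (u t)) with hF
  have key : ∀ t, HasDerivAt F 0 t := by
    intro t
    have Hu := (hu t).hasDerivAt
    have Hs := (hsd t).hasDerivAt
    have Hτ := (hτd t).hasDerivAt
    have Hn := (hn t).hasDerivAt
    have Hsin : HasDerivAt (fun t => Real.sin (u t)) (Real.cos (u t) * deriv u t) t :=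
      (Real.hasDerivAt_sin (u t)).comp t Hu
    have Hcos : HasDerivAt (fun t => Real.cos (u t)) (-Real.sin (u t) * deriv u t) t :=
      (Real.hasDerivAt_cos (u t)).comp t Hu
    have HF : HasDerivAt F
        (P ^ 2 * (2 * s t * deriv s t + 2 * τ t * deriv τ t)
          + A ^ 2 * (2 * n t * deriv n t)
          - 2 * k * ((P * (deriv s t * Real.sin (u t)
              + s t * (Real.cos (u t) * deriv u t)))
            - (A * (deriv n t * Real.cos (u t)
              + n t * (-Real.sin (u t) * deriv u t))))) t := by
      have h1 : HasDerivAt (fun t => s t ^ 2 + τ t ^ 2)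
          (2 * s t * deriv s t + 2 * τ t * deriv τ t) t := by
        have := (Hs.pow 2).add (Hτ.pow 2)
        simpa [Pi.add_def, Pi.pow_def, mul_comm, mul_assoc, mul_left_comm] using this
      have h2 : HasDerivAt (fun t => n t ^ 2) (2 * n t * deriv n t) t := by
        have := Hn.pow 2
        simpa [Pi.pow_def, mul_comm, mul_assoc, mul_left_comm] using this
      have h3 : HasDerivAt (fun t => P * s t * Real.sin (u t))
          (P * (deriv s t * Real.sin (u t) + s t * (Real.cos (u t) * deriv u t))) t := by
        have := ((Hs.mul Hsin).const_mul P)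
        simpa [mul_assoc] using this
      have h4 : HasDerivAt (fun t => A * n t * Real.cos (u t))
          (A * (deriv n t * Real.cos (u t) + n t * (-Real.sin (u t) * deriv u t))) t := by
        have := ((Hn.mul Hcos).const_mul A)
        simpa [mul_assoc] using this
      have := (((h1.const_mul (P ^ 2)).add (h2.const_mul (A ^ 2))).add_const
        (k ^ 2)).sub ((h3.sub h4).const_mul (2 * k))
      simpa [hF, Pi.sub_def, mul_comm, mul_assoc, mul_left_comm, add_assoc] using this
    have hzero :
        P ^ 2 * (2 * s t * deriv s t + 2 * τ t * deriv τ t)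
          + A ^ 2 * (2 * n t * deriv n t)
          - 2 * k * ((P * (deriv s t * Real.sin (u t)
              + s t * (Real.cos (u t) * deriv u t)))
            - (A * (deriv n t * Real.cos (u t)
              + n t * (-Real.sin (u t) * deriv u t)))) = 0 := by
      linear_combination
        (2 * P * s t - 2 * k * Real.sin (u t)) * heq1 t
        + (2 * P * τ t) * heq2 t
        + (2 * A * n t + 2 * k * Real.cos (u t)) * heq3 t
        + (2 * (μ - 1) * P * (A * n t + k * Real.cos (u t)) * deriv u t) * hs t
        + (2 * (μ - 1) * P * (A * n t + k * Real.cos (u t)) * Real.sin (u t) * deriv v t)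
            * hτ t
    exact hzero ▸ HF
  intro t₁ t₂
  exact is_const_of_deriv_eq_zero (fun t => (key t).differentiableAt)
    (fun t => (key t).deriv) t₁ t₂
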